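/- For every 0 ≤ q ≤ n−1, the equality (s_{n−q−1}s_{n−q−2}⋯s_1)·t·p_{n,q} = p_{n,q+1}·t·(s_1 s_2⋯s_q) holds in W_n (the product s_{n−q−1}⋯s_1 being empty when q = n−1 and the product s_1⋯s_q being empty when q = 0), and both sides are reduced expressions for the common element Π_{n,q}: its length is ℓ(Π_{n,q}) = (q+1)(n−q). -/

import Mathlib

namespace BnPaper

/-- The generator `t`: swaps `1` and `-1`, fixing all other points. -/
def t : Equiv.Perm ℤ := Equiv.swap 1 (-1)

/-- The generator `s i`: swaps `i ↔ i+1` and `-i ↔ -(i+1)`. -/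
def s (i : ℤ) : Equiv.Perm ℤ := Equiv.swap i (i + 1) * Equiv.swap (-i) (-(i + 1))

/-- The descending product `s_j · s_{j-1} ⋯ s_i` (the identity when `i > j`). -/
def desc (i j : ℕ) : Equiv.Perm ℤ :=
  ((List.range (j + 1 - i)).map (fun k => s ((j : ℤ) - (k : ℤ)))).prod

/-- The ascending product `s_i · s_{i+1} ⋯ s_j` (the identity when `i > j`). -/
def asc (i j : ℕ) : Equiv.Perm ℤ :=
  ((List.range (j + 1 - i)).map (fun k => s ((i : ℤ) + (k : ℤ)))).prod

/-- `t_j = s_{j-1} ⋯ s_1 · t · s_1 ⋯ s_{j-1}`. -/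
def tt (j : ℕ) : Equiv.Perm ℤ := desc 1 (j - 1) * t * (desc 1 (j - 1))⁻¹

/-- The Coxeter generating set `{t, s_1, …, s_{n-1}}` of `W_n`. -/
def gens (n : ℕ) : Set (Equiv.Perm ℤ) :=
  insert t {g | ∃ i : ℕ, 1 ≤ i ∧ i ≤ n - 1 ∧ g = s (i : ℤ)}

/-- The Coxeter length: the least number of generators whose product is `w`. -/
noncomputable def len (n : ℕ) (w : Equiv.Perm ℤ) : ℕ :=
  sInf {k | ∃ l : List (Equiv.Perm ℤ), l.length = k ∧ (∀ g ∈ l, g ∈ gens n) ∧ l.prod = w}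

/-- `W_n` realised as the signed permutations of `{-n, …, -1, 1, …, n}`:
permutations of `ℤ` that are odd (`w(-i) = -w(i)`) and fix everything beyond `n` in
absolute value. -/
def W (n : ℕ) : Set (Equiv.Perm ℤ) :=
  {w | (∀ i : ℤ, w (-i) = -(w i)) ∧ ∀ i : ℤ, (n : ℤ) < |i| → w i = i}

/-- The right descent set `Des(w)`. -/
def Des (n : ℕ) (w : Equiv.Perm ℤ) : Set (Equiv.Perm ℤ) :=
  {g | g ∈ gens n ∧ len n (w * g) < len n w}

/-- The enhanced descent-set invariant
`ρ_m(w) = Des(w) ∪ {t_j : 2 ≤ j ≤ m, ℓ(w t_j) < ℓ(w)}`. -/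
def rho (n m : ℕ) (w : Equiv.Perm ℤ) : Set (Equiv.Perm ℤ) :=
  Des n w ∪ {g | ∃ j : ℕ, 2 ≤ j ∧ j ≤ m ∧ g = tt j ∧ len n (w * tt j) < len n w}

/-- `Área_n`: the negative entries of the row form appear in increasing order and
the positive entries in strictly decreasing order. -/
def Area (n : ℕ) : Set (Equiv.Perm ℤ) :=
  {w | w ∈ W n ∧ ∀ i j : ℤ, 1 ≤ i → i < j → j ≤ (n : ℤ) →
    (w i < 0 → w j < 0 → w i < w j) ∧ (0 < w i → 0 < w j → w j < w i)}

/-- The suffix relation `y ≤_e w`: `w = z · y` with `ℓ(w) = ℓ(z) + ℓ(y)`. -/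
def Suf (n : ℕ) (y w : Equiv.Perm ℤ) : Prop :=
  ∃ z, z ∈ W n ∧ w = z * y ∧ len n w = len n z + len n y

/-- `a_q = (t)(s_1 t)(s_2 s_1 t) ⋯ (s_{q-1} ⋯ s_1 t)`. -/
def aw (q : ℕ) : Equiv.Perm ℤ := ((List.range q).map (fun k => desc 1 k * t)).prod

/-- `b_q = (s_{q+1})(s_{q+2} s_{q+1}) ⋯ (s_{n-1} ⋯ s_{q+1})` (identity for `q ≥ n-1`). -/
def bw (n q : ℕ) : Equiv.Perm ℤ :=
  ((List.range (n - 1 - q)).map (fun k => desc (q + 1) (q + 1 + k))).prod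

/-- `σ_{n,q} = a_q · b_q`. -/
def sig (n q : ℕ) : Equiv.Perm ℤ := aw q * bw n q

/-- `p_{n,q} = (s_{n-q} ⋯ s_1)(s_{n-q+1} ⋯ s_2) ⋯ (s_{n-1} ⋯ s_q)`,
with `p_{n,0} = p_{n,n} = e`. -/
def p (n q : ℕ) : Equiv.Perm ℤ :=
  ((List.range q).map (fun m => desc (1 + m) (n - q + m))).prod

/-- `Π_{n,q} = (s_{n-q-1} ⋯ s_1) · t · p_{n,q}`. -/
def PiElt (n q : ℕ) : Equiv.Perm ℤ := desc 1 (n - q - 1) * t * p n q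

/-- `Υ(w) = {z ∈ Área_n : Des(z) = Des(w)}`. -/
def Ups (n : ℕ) (w : Equiv.Perm ℤ) : Set (Equiv.Perm ℤ) :=
  {z | z ∈ Area n ∧ Des n z = Des n w}

/-- The parabolic subgroup `W_J = ⟨s_1, …, s_{n-1}⟩`. -/
def WJ (n : ℕ) : Set (Equiv.Perm ℤ) :=
  ↑(Subgroup.closure {g | ∃ i : ℕ, 1 ≤ i ∧ i ≤ n - 1 ∧ g = s (i : ℤ)})

/-- The parabolic subgroup `W_K = ⟨t, s_1, …, s_{n-2}⟩`. -/
def WK (n : ℕ) : Set (Equiv.Perm ℤ) :=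
  ↑(Subgroup.closure (insert t {g | ∃ i : ℕ, 1 ≤ i ∧ i ≤ n - 2 ∧ g = s (i : ℤ)}))

/-- Knuth relation of type `I_k` : `w' = w · s_{i+1}` when
`w(i+1) < w(i) < w(i+2)` or `w(i+2) < w(i) < w(i+1)`. -/
def stepI (k : ℕ) (w w' : Equiv.Perm ℤ) : Prop :=
  ∃ i : ℤ, 1 ≤ i ∧ i ≤ (k : ℤ) - 2 ∧
    ((w (i + 1) < w i ∧ w i < w (i + 2)) ∨ (w (i + 2) < w i ∧ w i < w (i + 1))) ∧
    w' = w * s (i + 1)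

/-- Knuth relation of type `II_k` : `w' = w · s_i` when
`w(i+1) < w(i+2) < w(i)` or `w(i) < w(i+2) < w(i+1)`. -/
def stepII (k : ℕ) (w w' : Equiv.Perm ℤ) : Prop :=
  ∃ i : ℤ, 1 ≤ i ∧ i ≤ (k : ℤ) - 2 ∧
    ((w (i + 1) < w (i + 2) ∧ w (i + 2) < w i) ∨ (w i < w (i + 2) ∧ w (i + 2) < w (i + 1))) ∧
    w' = w * s i

/-- Knuth relation of type `III_k` : `w' = w · s_i` when `w(i)` and `w(i+1)` have
opposite signs. -/
def stepIII (k : ℕ) (w w' : Equiv.Perm ℤ) : Prop :=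
  ∃ i : ℤ, 1 ≤ i ∧ i ≤ (k : ℤ) - 1 ∧
    ((w i < 0 ∧ 0 < w (i + 1)) ∨ (w (i + 1) < 0 ∧ 0 < w i)) ∧
    w' = w * s i


lemma coe_list (l : List ℕ) :
    (l.flatMap (fun a : ℕ => (pure ((a:ℤ)) : List ℤ))) = l.map (fun a : ℕ => (a:ℤ)) := by
  induction l with
  | nil => rfl
  | cons a l ih => rw [List.flatMap_cons, ih]; rfl

lemma desc_def (i j : ℕ) :
    desc i j = ((List.range (j + 1 - i)).map (fun k : ℕ => s ((j : ℤ) - (k : ℤ)))).prod := by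
  unfold desc
  congr 1
  simp only [List.bind_eq_flatMap, coe_list, List.map_map]
  rfl

lemma asc_def (i j : ℕ) :
    asc i j = ((List.range (j + 1 - i)).map (fun k : ℕ => s ((i : ℤ) + (k : ℤ)))).prod := by
  unfold asc
  congr 1
  simp only [List.bind_eq_flatMap, coe_list, List.map_map]
  rfl

lemma t_apply (x : ℤ) : t x = if x = 1 then -1 else if x = -1 then 1 else x := by
  simp only [t, Equiv.swap_apply_def]

lemma s_apply (i x : ℤ) (hi : 1 ≤ i) :
    s i x = if x = i then i + 1 else if x = i + 1 then i else if x = -i then -(i+1)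
      else if x = -(i+1) then -i else x := by
  simp only [s, Equiv.Perm.mul_apply, Equiv.swap_apply_def]
  repeat' split
  all_goals omega

lemma s_mul_self (i : ℤ) (hi : 1 ≤ i) : s i * s i = 1 := by
  ext x
  simp only [Equiv.Perm.mul_apply, Equiv.Perm.one_apply, s_apply _ _ hi]
  repeat' split
  all_goals omega

lemma desc_eq_one (i j : ℕ) (h : j < i) : desc i j = 1 := by
  rw [desc_def]
  have : j + 1 - i = 0 := by omega
  simp [this]

lemma asc_eq_one (i j : ℕ) (h : j < i) : asc i j = 1 := by
  rw [asc_def]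
  have : j + 1 - i = 0 := by omega
  simp [this]

lemma desc_succ (i j : ℕ) (h : i ≤ j + 1) : desc i (j+1) = s ((j:ℤ)+1) * desc i j := by
  rw [desc_def, desc_def]
  rw [show j+1+1-i = (j+1-i)+1 by omega, List.range_succ_eq_map, List.map_cons,
    List.prod_cons, List.map_map]
  have h2 : (List.range (j+1-i)).map ((fun k : ℕ => s ((↑(j+1):ℤ) - ↑k)) ∘ Nat.succ)
      = (List.range (j+1-i)).map (fun k : ℕ => s ((j:ℤ) - ↑k)) := by
    apply List.map_congr_left
    intro a _
    simp only [Function.comp_apply]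
    congr 1
    push_cast
    ring
  rw [h2, show ((↑(j+1):ℤ) - ((0:ℕ):ℤ)) = (j:ℤ)+1 by push_cast; ring]

lemma asc_succ (i j : ℕ) (h : i ≤ j + 1) : asc i (j+1) = asc i j * s ((j:ℤ)+1) := by
  rw [asc_def, asc_def]
  rw [show j+1+1-i = (j+1-i)+1 by omega, List.range_succ, List.map_append, List.prod_append]
  congr 1
  simp only [List.map_cons, List.map_nil, List.prod_cons, List.prod_nil, mul_one]
  congr 1
  push_cast [Nat.cast_sub h]
  ring

lemma asc_mul_desc (i j : ℕ) (hi : 1 ≤ i) : asc i j * desc i j = 1 := by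
  induction j with
  | zero =>
    rw [desc_eq_one i 0 (by omega), asc_eq_one i 0 (by omega), one_mul]
  | succ j ih =>
    by_cases h : i ≤ j + 1
    · rw [desc_succ i j h, asc_succ i j h, mul_assoc, ← mul_assoc (s ((j:ℤ)+1)),
        s_mul_self _ (by omega), one_mul, ih]
    · rw [desc_eq_one _ _ (by omega), asc_eq_one _ _ (by omega), one_mul]

def descFun (i j : ℕ) (x : ℤ) : ℤ :=
  if x = (i:ℤ) then (j:ℤ)+1
  else if (i:ℤ)+1 ≤ x ∧ x ≤ (j:ℤ)+1 then x-1
  else if x = -(i:ℤ) then -((j:ℤ)+1)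
  else if -((j:ℤ)+1) ≤ x ∧ x ≤ -((i:ℤ)+1) then x+1
  else x

lemma desc_apply (i j : ℕ) (h1 : 1 ≤ i) (hij : i ≤ j) (x : ℤ) :
    desc i j x = descFun i j x := by
  induction j, hij using Nat.le_induction with
  | base =>
    rw [desc_def, show i+1-i = 1 by omega]
    rw [show List.range 1 = [0] from rfl]
    simp only [List.map_cons, List.map_nil, List.prod_cons, List.prod_nil, mul_one]
    rw [show ((i:ℤ) - ((0:ℕ):ℤ)) = (i:ℤ) by push_cast; ring]
    rw [s_apply _ _ (by exact_mod_cast h1)]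
    unfold descFun
    repeat' split
    all_goals omega
  | succ j hij ih =>
    rw [desc_succ i j (by omega), Equiv.Perm.mul_apply, ih,
      s_apply _ _ (by omega : (1:ℤ) ≤ (j:ℤ)+1)]
    unfold descFun
    repeat' split
    all_goals omega




def pFun (n q : ℕ) (x : ℤ) : ℤ :=
  if 1 ≤ x ∧ x ≤ (q:ℤ) then x + ((n:ℤ)-(q:ℤ))
  else if (q:ℤ)+1 ≤ x ∧ x ≤ (n:ℤ) then x - q
  else if -(q:ℤ) ≤ x ∧ x ≤ -1 then x - ((n:ℤ)-(q:ℤ))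
  else if -(n:ℤ) ≤ x ∧ x ≤ -((q:ℤ)+1) then x + q
  else x

lemma p_succ (n q : ℕ) (h : q + 1 ≤ n) : p n (q+1) = p (n-1) q * desc (q+1) (n-1) := by
  unfold p
  rw [List.range_succ, List.map_append, List.prod_append]
  congr 1
  · congr 1
    apply List.map_congr_left
    intro m hm
    congr 1
    omega
  · simp only [List.map_cons, List.map_nil, List.prod_cons, List.prod_nil, mul_one]
    congr 1 <;> omega

set_option maxHeartbeats 2000000 in
lemma p_apply (n q : ℕ) (hq : q ≤ n) : ∀ x : ℤ, p n q x = pFun n q x := by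
  induction q generalizing n with
  | zero =>
    intro x
    unfold p
    simp only [List.range_zero, List.map_nil, List.prod_nil, Equiv.Perm.one_apply]
    unfold pFun
    split_ifs <;> omega
  | succ q ih =>
    intro x
    rw [p_succ n q hq, Equiv.Perm.mul_apply]
    by_cases hd : q + 1 ≤ n - 1
    · rw [desc_apply (q+1) (n-1) (by omega) hd, ih (n-1) (by omega)]
      unfold pFun descFun
      repeat' split
      all_goals (first | omega | (split_ifs at * <;> omega))
    · rw [desc_eq_one (q+1) (n-1) (by omega)]
      simp only [Equiv.Perm.one_apply]
      rw [ih (n-1) (by omega)]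
      unfold pFun
      repeat' split
      all_goals (first | omega | (split_ifs at * <;> omega))

def ascFun (i j : ℕ) (x : ℤ) : ℤ :=
  if x = (j:ℤ)+1 then (i:ℤ)
  else if (i:ℤ) ≤ x ∧ x ≤ (j:ℤ) then x+1
  else if x = -((j:ℤ)+1) then -(i:ℤ)
  else if -(j:ℤ) ≤ x ∧ x ≤ -(i:ℤ) then x-1
  else x

lemma perm_apply_inv_self (w : Equiv.Perm ℤ) (x : ℤ) : w (w⁻¹ x) = x :=
  Equiv.apply_symm_apply w x

lemma asc_apply (i j : ℕ) (h1 : 1 ≤ i) (hij : i ≤ j) (x : ℤ) :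
    asc i j x = ascFun i j x := by
  have hinv : asc i j = (desc i j)⁻¹ :=
    eq_inv_of_mul_eq_one_left (asc_mul_desc i j h1)
  have hd : desc i j (ascFun i j x) = x := by
    rw [desc_apply i j h1 hij]
    unfold descFun ascFun
    repeat' split
    all_goals omega
  have h2 : desc i j (asc i j x) = x := by
    rw [hinv]; exact perm_apply_inv_self _ _
  exact (desc i j).injective (by rw [hd, h2])

def PiFun (n q : ℕ) (x : ℤ) : ℤ :=
  if 1 ≤ x ∧ x ≤ (q:ℤ) then x+((n:ℤ)-(q:ℤ))
  else if x = (q:ℤ)+1 then -((n:ℤ)-(q:ℤ))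
  else if (q:ℤ)+2 ≤ x ∧ x ≤ (n:ℤ) then x-(q:ℤ)-1
  else if -(q:ℤ) ≤ x ∧ x ≤ -1 then x-((n:ℤ)-(q:ℤ))
  else if x = -((q:ℤ)+1) then (n:ℤ)-(q:ℤ)
  else if -(n:ℤ) ≤ x ∧ x ≤ -((q:ℤ)+2) then x+(q:ℤ)+1
  else x

set_option maxHeartbeats 4000000 in
lemma lhs_apply (n q : ℕ) (hn : 2 ≤ n) (hq : q ≤ n - 1) (x : ℤ) :
    (desc 1 (n-q-1) * t * p n q) x = PiFun n q x := by
  simp only [Equiv.Perm.mul_apply]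
  rw [p_apply n q (by omega), t_apply]
  by_cases hd : 1 ≤ n - q - 1
  · rw [desc_apply 1 (n-q-1) le_rfl hd]
    unfold descFun pFun PiFun
    repeat' split
    all_goals (first | omega | (split_ifs at * <;> omega))
  · rw [desc_eq_one 1 (n-q-1) (by omega)]
    simp only [Equiv.Perm.one_apply]
    unfold pFun PiFun
    repeat' split
    all_goals (first | omega | (split_ifs at * <;> omega))

set_option maxHeartbeats 4000000 in
lemma rhs_apply (n q : ℕ) (hn : 2 ≤ n) (hq : q ≤ n - 1) (x : ℤ) :
    (p n (q+1) * t * asc 1 q) x = PiFun n q x := by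
  simp only [Equiv.Perm.mul_apply]
  by_cases ha : 1 ≤ q
  · rw [asc_apply 1 q le_rfl ha, t_apply, p_apply n (q+1) (by omega)]
    unfold ascFun pFun PiFun
    repeat' split
    all_goals (first | omega | (split_ifs at * <;> omega))
  · rw [asc_eq_one 1 q (by omega)]
    simp only [Equiv.Perm.one_apply]
    rw [t_apply, p_apply n (q+1) (by omega)]
    unfold pFun PiFun
    repeat' split
    all_goals (first | omega | (split_ifs at * <;> omega))

lemma part1 (n q : ℕ) (hn : 2 ≤ n) (hq : q ≤ n - 1) :
    desc 1 (n - q - 1) * t * p n q = p n (q + 1) * t * asc 1 q :=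
  Equiv.ext fun x => (lhs_apply n q hn hq x).trans (rhs_apply n q hn hq x).symm


lemma one_mem_W (n : ℕ) : (1 : Equiv.Perm ℤ) ∈ W n :=
  ⟨fun i => by simp, fun i _ => by simp⟩

lemma mul_mem_W (n : ℕ) {u v : Equiv.Perm ℤ} (hu : u ∈ W n) (hv : v ∈ W n) :
    u * v ∈ W n := by
  refine ⟨fun i => ?_, fun i hi => ?_⟩
  · simp only [Equiv.Perm.mul_apply, hv.1, hu.1]
  · simp only [Equiv.Perm.mul_apply, hv.2 i hi, hu.2 i hi]

lemma t_mem_W (n : ℕ) (hn : 1 ≤ n) : t ∈ W n := by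
  constructor
  · intro i
    rw [t_apply, t_apply]
    repeat' split
    all_goals omega
  · intro i hi
    rw [t_apply]
    rcases lt_abs.mp hi with h | h
    all_goals repeat' split
    all_goals omega

lemma s_mem_W (n : ℕ) (i : ℕ) (h1 : 1 ≤ i) (h2 : i ≤ n - 1) : s (i:ℤ) ∈ W n := by
  have hi : (1:ℤ) ≤ (i:ℤ) := by exact_mod_cast h1
  constructor
  · intro x
    rw [s_apply _ _ hi, s_apply _ _ hi]
    repeat' split
    all_goals omega
  · intro x hx
    rw [s_apply _ _ hi]
    have hin : (i:ℤ) + 1 ≤ (n:ℤ) := by omega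
    rcases lt_abs.mp hx with h | h
    all_goals repeat' split
    all_goals omega

lemma gens_sub_W (n : ℕ) (hn : 1 ≤ n) {g : Equiv.Perm ℤ} (hg : g ∈ gens n) : g ∈ W n := by
  rcases hg with rfl | ⟨i, hi1, hi2, rfl⟩
  · exact t_mem_W n hn
  · exact s_mem_W n i hi1 hi2

noncomputable def invS (n : ℕ) (w : Equiv.Perm ℤ) : Finset (ℤ × ℤ) :=
  (Finset.Icc (1:ℤ) (n:ℤ) ×ˢ Finset.Icc (1:ℤ) (n:ℤ)).filter
    (fun pr => pr.1 < pr.2 ∧ w pr.2 < w pr.1)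

noncomputable def LL (n : ℕ) (w : Equiv.Perm ℤ) : ℕ :=
  (invS n w).card + ∑ i ∈ Finset.Icc (1:ℤ) (n:ℤ), (-(w i)).toNat

lemma LL_one (n : ℕ) : LL n 1 = 0 := by
  unfold LL invS
  have h1 : ((Finset.Icc (1:ℤ) (n:ℤ) ×ˢ Finset.Icc (1:ℤ) (n:ℤ)).filter
      (fun pr => pr.1 < pr.2 ∧ (1 : Equiv.Perm ℤ) pr.2 < (1 : Equiv.Perm ℤ) pr.1)) = ∅ :=
    Finset.filter_false_of_mem (fun pr _ => by simp only [Equiv.Perm.one_apply]; omega)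
  have h2 : ∑ i ∈ Finset.Icc (1:ℤ) (n:ℤ), (-((1 : Equiv.Perm ℤ) i)).toNat = 0 :=
    Finset.sum_eq_zero (fun i hi => by
      rw [Finset.mem_Icc] at hi
      simp only [Equiv.Perm.one_apply]
      omega)
  rw [h1, h2, Finset.card_empty]

lemma LL_mul_s (n : ℕ) (w : Equiv.Perm ℤ) (i : ℕ) (h1 : 1 ≤ i) (h2 : i ≤ n - 1) :
    LL n (w * s (i:ℤ)) ≤ LL n w + 1 := by
  have hi : (1:ℤ) ≤ (i:ℤ) := by exact_mod_cast h1
  have hin : (i:ℤ) + 1 ≤ (n:ℤ) := by omega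
  have happ : ∀ x : ℤ, s (i:ℤ) x = if x = (i:ℤ) then (i:ℤ)+1 else if x = (i:ℤ)+1 then (i:ℤ)
      else if x = -(i:ℤ) then -((i:ℤ)+1) else if x = -((i:ℤ)+1) then -(i:ℤ) else x :=
    fun x => s_apply _ x hi
  have hsum : ∑ j ∈ Finset.Icc (1:ℤ) (n:ℤ), (-(w (s (i:ℤ) j))).toNat
      = ∑ j ∈ Finset.Icc (1:ℤ) (n:ℤ), (-(w j)).toNat := by
    refine Finset.sum_equiv (s (i:ℤ)) (f := fun j => (-(w (s (i:ℤ) j))).toNat)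
      (g := fun j => (-(w j)).toNat) (fun j => ?_) (fun j _ => rfl)
    rw [Finset.mem_Icc, Finset.mem_Icc, happ j]
    repeat' split
    all_goals omega
  have hcard : ((invS n (w * s (i:ℤ))).erase ((i:ℤ), (i:ℤ)+1)).card ≤ (invS n w).card := by
    apply Finset.card_le_card_of_injOn (fun pr => (s (i:ℤ) pr.1, s (i:ℤ) pr.2))
    · intro pr hpr
      simp only [Finset.mem_coe] at hpr ⊢
      rw [Finset.mem_erase] at hpr
      obtain ⟨hne, hpr⟩ := hpr
      unfold invS at hpr ⊢
      rw [Finset.mem_filter, Finset.mem_product, Finset.mem_Icc, Finset.mem_Icc] at hpr ⊢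
      obtain ⟨⟨hp1, hp2⟩, hlt, hval⟩ := hpr
      have hne' : ¬(pr.1 = (i:ℤ) ∧ pr.2 = (i:ℤ)+1) := by
        intro ⟨e1, e2⟩
        exact hne (Prod.ext e1 e2)
      refine ⟨⟨?_, ?_⟩, ?_, ?_⟩
      · rw [happ pr.1]; repeat' split; all_goals omega
      · rw [happ pr.2]; repeat' split; all_goals omega
      · rw [happ pr.1, happ pr.2]; repeat' split; all_goals omega
      · simpa only [Equiv.Perm.mul_apply] using hval
    · intro a _ b _ hab
      simp only [Prod.mk.injEq] at hab
      exact Prod.ext ((s (i:ℤ)).injective hab.1) ((s (i:ℤ)).injective hab.2)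
  have hcard2 : (invS n (w * s (i:ℤ))).card ≤ ((invS n (w * s (i:ℤ))).erase ((i:ℤ), (i:ℤ)+1)).card + 1 := by
    have := Finset.card_erase_add_one (s := invS n (w * s (i:ℤ))) (a := ((i:ℤ), (i:ℤ)+1))
    by_cases hm : ((i:ℤ), (i:ℤ)+1) ∈ invS n (w * s (i:ℤ))
    · rw [this hm]
    · rw [Finset.erase_eq_of_notMem hm]
      omega
  unfold LL
  have : ∑ j ∈ Finset.Icc (1:ℤ) (n:ℤ), (-((w * s (i:ℤ)) j)).toNat
      = ∑ j ∈ Finset.Icc (1:ℤ) (n:ℤ), (-(w j)).toNat := by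
    simp only [Equiv.Perm.mul_apply]
    exact hsum
  omega



lemma W_zero {n : ℕ} {w : Equiv.Perm ℤ} (hw : w ∈ W n) : w 0 = 0 := by
  have h := hw.1 0
  rw [neg_zero] at h
  omega

lemma W_abs_le {n : ℕ} {w : Equiv.Perm ℤ} (hw : w ∈ W n) {x : ℤ} (hx : |x| ≤ (n:ℤ)) :
    |w x| ≤ (n:ℤ) := by
  by_contra hc
  have h2 : (n:ℤ) < |w x| := lt_of_not_ge hc
  have hfix : w (w x) = w x := hw.2 (w x) h2
  have hxx : w x = x := w.injective hfix
  rw [hxx] at h2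
  omega

lemma LL_mul_t (n : ℕ) (hn : 1 ≤ n) (w : Equiv.Perm ℤ) (hw : w ∈ W n) :
    LL n (w * t) ≤ LL n w + 1 := by
  have hm0 : w 1 ≠ 0 := by
    intro h
    have h1 : w 1 = w 0 := by rw [W_zero hw, h]
    have := w.injective h1
    omega
  have hmabs : |w 1| ≤ (n:ℤ) := W_abs_le hw (by rw [abs_one]; exact_mod_cast hn)
  rw [abs_le] at hmabs
  have hwt1 : (w * t) 1 = -(w 1) := by
    have ht1 : t 1 = -1 := by rw [t_apply]; norm_num
    rw [Equiv.Perm.mul_apply, ht1]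
    exact hw.1 1
  have hwtj : ∀ j : ℤ, j ≠ 1 → j ≠ -1 → (w * t) j = w j := fun j u v => by
    rw [Equiv.Perm.mul_apply, t_apply, if_neg u, if_neg v]
  have hIcc : Finset.Icc (1:ℤ) (n:ℤ) = insert 1 (Finset.Icc 2 (n:ℤ)) := by
    ext x
    rw [Finset.mem_insert, Finset.mem_Icc, Finset.mem_Icc]
    omega
  have h1notin : (1:ℤ) ∉ Finset.Icc (2:ℤ) (n:ℤ) := by rw [Finset.mem_Icc]; omega
  have hsum : ∀ u : Equiv.Perm ℤ, ∑ j ∈ Finset.Icc (1:ℤ) (n:ℤ), (-(u j)).toNat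
      = (-(u 1)).toNat + ∑ j ∈ Finset.Icc (2:ℤ) (n:ℤ), (-(u j)).toNat := fun u => by
    rw [hIcc, Finset.sum_insert h1notin]
  have hsum2 : ∑ j ∈ Finset.Icc (2:ℤ) (n:ℤ), (-((w * t) j)).toNat
      = ∑ j ∈ Finset.Icc (2:ℤ) (n:ℤ), (-(w j)).toNat :=
    Finset.sum_congr rfl (fun j hj => by
      rw [Finset.mem_Icc] at hj
      rw [hwtj j (by omega) (by omega)])
  have hsliceA : ∀ u : Equiv.Perm ℤ,
      (invS n u).card = ((Finset.Icc (2:ℤ) (n:ℤ)).filter (fun j => u j < u 1)).card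
        + ((invS n u).filter (fun pr => 2 ≤ pr.1)).card := by
    intro u
    rw [← Finset.card_filter_add_card_filter_not (p := fun pr => pr.1 = 1)
      (s := invS n u)]
    congr 1
    · apply Finset.card_nbij' (i := fun pr => pr.2) (j := fun j => ((1:ℤ), j))
      · intro pr hpr
        simp only [Finset.mem_coe] at hpr ⊢
        unfold invS at hpr
        rw [Finset.mem_filter, Finset.mem_filter, Finset.mem_product,
          Finset.mem_Icc, Finset.mem_Icc] at hpr
        obtain ⟨⟨⟨hp1, hp2⟩, hlt, hval⟩, he⟩ := hpr
        rw [Finset.mem_filter, Finset.mem_Icc]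
        rw [he] at hval hlt
        exact ⟨⟨by omega, by omega⟩, hval⟩
      · intro j hj
        simp only [Finset.mem_coe] at hj ⊢
        rw [Finset.mem_filter, Finset.mem_Icc] at hj
        unfold invS
        rw [Finset.mem_filter, Finset.mem_filter, Finset.mem_product,
          Finset.mem_Icc, Finset.mem_Icc]
        exact ⟨⟨⟨⟨le_refl 1, by omega⟩, by omega, by omega⟩, by omega, hj.2⟩, rfl⟩
      · intro pr hpr
        rw [Finset.mem_coe] at hpr
        unfold invS at hpr
        rw [Finset.mem_filter] at hpr
        have := hpr.2
        exact (Prod.ext this.symm rfl)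
      · intro j _
        rfl
    · apply congrArg
      apply Finset.filter_congr
      intro pr hpr
      unfold invS at hpr
      rw [Finset.mem_filter, Finset.mem_product, Finset.mem_Icc, Finset.mem_Icc] at hpr
      constructor
      · intro h; omega
      · intro h; omega
  have hfilter2 : (invS n (w * t)).filter (fun pr => 2 ≤ pr.1)
      = (invS n w).filter (fun pr => 2 ≤ pr.1) := by
    unfold invS
    rw [Finset.filter_filter, Finset.filter_filter]
    apply Finset.filter_congr
    intro pr hpr
    rw [Finset.mem_product, Finset.mem_Icc, Finset.mem_Icc] at hpr
    constructor
    · rintro ⟨⟨hlt, hval⟩, h2⟩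
      refine ⟨⟨hlt, ?_⟩, h2⟩
      rwa [hwtj pr.1 (by omega) (by omega), hwtj pr.2 (by omega) (by omega)] at hval
    · rintro ⟨⟨hlt, hval⟩, h2⟩
      refine ⟨⟨hlt, ?_⟩, h2⟩
      rwa [hwtj pr.1 (by omega) (by omega), hwtj pr.2 (by omega) (by omega)]
  have hBwt : (Finset.Icc (2:ℤ) (n:ℤ)).filter (fun j => (w * t) j < (w * t) 1)
      = (Finset.Icc (2:ℤ) (n:ℤ)).filter (fun j => w j < -(w 1)) := by
    apply Finset.filter_congr
    intro j hj
    rw [Finset.mem_Icc] at hj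
    rw [hwtj j (by omega) (by omega), hwt1]
  rcases lt_or_gt_of_ne hm0 with hneg | hpos
  · -- w 1 < 0
    have hsub : (Finset.Icc (2:ℤ) (n:ℤ)).filter (fun j => w j < w 1)
        ⊆ (Finset.Icc (2:ℤ) (n:ℤ)).filter (fun j => w j < -(w 1)) := by
      intro j hj
      rw [Finset.mem_filter] at hj ⊢
      exact ⟨hj.1, by omega⟩
    have hc := Finset.card_sdiff_add_card_eq_card hsub
    have hinj : ((Finset.Icc (2:ℤ) (n:ℤ)).filter (fun j => w j < -(w 1))
          \ (Finset.Icc (2:ℤ) (n:ℤ)).filter (fun j => w j < w 1)).card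
        ≤ (Finset.Icc (1:ℤ) (-(w 1)-1)).card := by
      apply Finset.card_le_card_of_injOn (fun j => |w j|)
      · intro j hj
        simp only [Finset.mem_coe] at hj ⊢
        rw [Finset.mem_sdiff, Finset.mem_filter, Finset.mem_filter, Finset.mem_Icc] at hj
        obtain ⟨⟨⟨hj2, hjn⟩, hlt⟩, hnot⟩ := hj
        have hge : w 1 ≤ w j := by
          by_contra hcon
          exact hnot ⟨⟨hj2, hjn⟩, by omega⟩
        have hne1 : w j ≠ w 1 := fun h => by have := w.injective h; omega
        have hne0 : w j ≠ 0 := fun h => by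
          have : j = (0:ℤ) := w.injective (by rw [h, W_zero hw])
          omega
        have habs := abs_choice (w j)
        have habs0 := abs_nonneg (w j)
        rw [Finset.mem_Icc]
        rcases habs with h | h <;> omega
      · intro j1 hj1 j2 hj2 heq
        simp only at heq
        have h1 := abs_choice (w j1)
        have h2 := abs_choice (w j2)
        have hd : w j1 = w j2 ∨ w j1 = -(w j2) := by
          rcases h1 with h1 | h1 <;> rcases h2 with h2 | h2 <;> omega
        simp only [Finset.coe_sdiff, Set.mem_diff, Finset.mem_coe, Finset.mem_filter,
          Finset.mem_Icc] at hj1 hj2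
        rcases hd with h | h
        · exact w.injective h
        · have hneg2 : w j1 = w (-j2) := by rw [hw.1 j2, h]
          have hj12 : j1 = -j2 := w.injective hneg2
          have := hj1.1.1
          have := hj2.1.1
          omega
    have hICC : (Finset.Icc (1:ℤ) (-(w 1)-1)).card = (-(w 1)-1).toNat := by
      rw [Int.card_Icc]
      omega
    unfold LL
    rw [hsliceA (w * t), hsliceA w, hfilter2, hBwt, hsum (w * t), hsum w, hsum2, hwt1]
    omega
  · -- 0 < w 1
    have hsub : (Finset.Icc (2:ℤ) (n:ℤ)).filter (fun j => w j < -(w 1))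
        ⊆ (Finset.Icc (2:ℤ) (n:ℤ)).filter (fun j => w j < w 1) := by
      intro j hj
      rw [Finset.mem_filter] at hj ⊢
      exact ⟨hj.1, by omega⟩
    have hc := Finset.card_sdiff_add_card_eq_card hsub
    have hinj : (Finset.Icc (1:ℤ) (w 1 - 1)).card
        ≤ ((Finset.Icc (2:ℤ) (n:ℤ)).filter (fun j => w j < w 1)
          \ (Finset.Icc (2:ℤ) (n:ℤ)).filter (fun j => w j < -(w 1))).card := by
      apply Finset.card_le_card_of_injOn (fun v => |w⁻¹ v|)
      · intro v hv
        simp only [Finset.mem_coe] at hv ⊢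
        rw [Finset.mem_Icc] at hv
        have hxv : w (w⁻¹ v) = v := perm_apply_inv_self w v
        have hch := abs_choice (w⁻¹ v)
        have h0 : w⁻¹ v ≠ 0 := fun h => by rw [h, W_zero hw] at hxv; omega
        have h1 : w⁻¹ v ≠ 1 := fun h => by rw [h] at hxv; omega
        have hm1 : w⁻¹ v ≠ -1 := fun h => by
          rw [h] at hxv
          have := hw.1 1
          omega
        have habsn : |w⁻¹ v| ≤ (n:ℤ) := by
          by_contra hcon
          have hfix := hw.2 (w⁻¹ v) (lt_of_not_ge hcon)
          rw [hxv] at hfix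
          omega
        have hval : w |w⁻¹ v| = v ∨ w |w⁻¹ v| = -v := by
          rcases hch with h | h
          · left; rw [h, hxv]
          · right; rw [h, hw.1, hxv]
        have habs0 := abs_nonneg (w⁻¹ v)
        rw [Finset.mem_sdiff, Finset.mem_filter, Finset.mem_filter, Finset.mem_Icc]
        rcases hch with h | h <;> rcases hval with h' | h' <;> omega
      · intro v1 hv1 v2 hv2 heq
        simp only at heq
        have h1 := abs_choice (w⁻¹ v1)
        have h2 := abs_choice (w⁻¹ v2)
        have hd : w⁻¹ v1 = w⁻¹ v2 ∨ w⁻¹ v1 = -(w⁻¹ v2) := by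
          rcases h1 with h1 | h1 <;> rcases h2 with h2 | h2 <;> omega
        simp only [Finset.coe_Icc, Set.mem_Icc] at hv1 hv2
        rcases hd with h | h
        · have := congrArg w h
          rwa [perm_apply_inv_self, perm_apply_inv_self] at this
        · have := congrArg w h
          rw [perm_apply_inv_self, hw.1, perm_apply_inv_self] at this
          omega
    have hICC : (Finset.Icc (1:ℤ) (w 1 - 1)).card = (w 1 - 1).toNat := by
      rw [Int.card_Icc]
      omega
    unfold LL
    rw [hsliceA (w * t), hsliceA w, hfilter2, hBwt, hsum (w * t), hsum w, hsum2, hwt1]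
    omega

lemma prod_gens_bound (n : ℕ) (hn : 2 ≤ n) (l : List (Equiv.Perm ℤ))
    (hmem : ∀ g ∈ l, g ∈ gens n) : l.prod ∈ W n ∧ LL n l.prod ≤ l.length := by
  induction l using List.reverseRecOn with
  | nil =>
    refine ⟨by simpa using one_mem_W n, ?_⟩
    simp [LL_one]
  | append_singleton l g ih =>
    have hl := ih (fun x hx => hmem x (List.mem_append_left _ hx))
    have hg : g ∈ gens n := hmem g (List.mem_append_right _ (List.mem_singleton_self g))
    rw [List.prod_append, List.prod_singleton, List.length_append, List.length_singleton]
    constructor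
    · exact mul_mem_W n hl.1 (gens_sub_W n (by omega) hg)
    · rcases hg with rfl | ⟨i, h1, h2, rfl⟩
      · have := LL_mul_t n (by omega) l.prod hl.1
        omega
      · have := LL_mul_s n l.prod i h1 h2
        omega

lemma LL_lower (n q : ℕ) (hn : 2 ≤ n) (hq : q ≤ n - 1) :
    (q+1) * (n-q) ≤ LL n (desc 1 (n-q-1) * t * p n q) := by
  have hval : ∀ x : ℤ, (desc 1 (n-q-1) * t * p n q) x = PiFun n q x := lhs_apply n q hn hq
  set E := desc 1 (n-q-1) * t * p n q with hE
  have hq1n : ((q:ℤ)+1) ∈ Finset.Icc (1:ℤ) (n:ℤ) := by rw [Finset.mem_Icc]; omega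
  have hnsum : (n - q : ℕ) ≤ ∑ i ∈ Finset.Icc (1:ℤ) (n:ℤ), (-(E i)).toNat := by
    have hle := Finset.single_le_sum (f := fun i => (-(E i)).toNat)
      (fun i _ => Nat.zero_le _) hq1n
    have hEq : E ((q:ℤ)+1) = -((n:ℤ)-(q:ℤ)) := by
      rw [hval]
      unfold PiFun
      rw [if_neg (by omega), if_pos rfl]
    have hle' : (-(E ((q:ℤ)+1))).toNat ≤ ∑ i ∈ Finset.Icc (1:ℤ) (n:ℤ), (-(E i)).toNat := hle
    rw [hEq] at hle'
    omega
  have hsub : (Finset.Icc (1:ℤ) (q:ℤ)) ×ˢ (Finset.Icc ((q:ℤ)+1) (n:ℤ)) ⊆ invS n E := by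
    intro pr hpr
    rw [Finset.mem_product, Finset.mem_Icc, Finset.mem_Icc] at hpr
    unfold invS
    rw [Finset.mem_filter, Finset.mem_product, Finset.mem_Icc, Finset.mem_Icc]
    refine ⟨⟨⟨by omega, by omega⟩, by omega, by omega⟩, by omega, ?_⟩
    rw [hval, hval]
    unfold PiFun
    repeat' split
    all_goals omega
  have hcard : ((Finset.Icc (1:ℤ) (q:ℤ)) ×ˢ (Finset.Icc ((q:ℤ)+1) (n:ℤ))).card = q * (n - q) := by
    rw [Finset.card_product, Int.card_Icc, Int.card_Icc]
    have e1 : ((q:ℤ) + 1 - 1).toNat = q := by omega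
    have e2 : ((n:ℤ) + 1 - ((q:ℤ)+1)).toNat = n - q := by omega
    rw [e1, e2]
  have hinv : q * (n-q) ≤ (invS n E).card := hcard ▸ Finset.card_le_card hsub
  have hmul : (q+1) * (n-q) = q * (n-q) + (n-q) := by ring
  unfold LL
  omega

lemma sum_map_const_nat (c k : ℕ) : (((List.range c).map (fun _ : ℕ => k)).sum) = c * k := by
  induction c with
  | zero => simp
  | succ c ih =>
    rw [List.range_succ, List.map_append, List.sum_append, ih]
    simp [Nat.succ_mul]

lemma exists_word (n q : ℕ) (hn : 2 ≤ n) (hq : q ≤ n - 1) :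
    ∃ l : List (Equiv.Perm ℤ), l.length = (q+1)*(n-q) ∧ (∀ g ∈ l, g ∈ gens n) ∧
      l.prod = p n (q+1) * t * asc 1 q := by
  refine ⟨(((List.range (q+1)).map (fun m => (List.range ((n-(q+1)+m)+1-(1+m))).map
      (fun k : ℕ => s (((n-(q+1)+m : ℕ):ℤ) - (k:ℤ))))).flatten ++ [t]) ++
      (List.range q).map (fun k : ℕ => s ((1:ℤ)+(k:ℤ))), ?_, ?_, ?_⟩
  · rw [List.length_append, List.length_append, List.length_singleton, List.length_map,
      List.length_range, List.length_flatten, List.map_map]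
    have hconst : (List.range (q+1)).map (List.length ∘ (fun m =>
        (List.range ((n-(q+1)+m)+1-(1+m))).map
          (fun k : ℕ => s (((n-(q+1)+m : ℕ):ℤ) - (k:ℤ)))))
        = (List.range (q+1)).map (fun _ : ℕ => n - q - 1) := by
      apply List.map_congr_left
      intro m hm
      rw [List.mem_range] at hm
      simp only [Function.comp_apply, List.length_map, List.length_range]
      omega
    rw [hconst, sum_map_const_nat]
    have h1 : n - q - 1 + 1 = n - q := by omega
    calc (q + 1) * (n - q - 1) + 1 + q = (q+1) * (n - q - 1) + (q+1) := by omega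
    _ = (q+1) * (n - q - 1 + 1) := by rw [Nat.mul_succ]
    _ = (q+1) * (n-q) := by rw [h1]
  · intro g hg
    rcases List.mem_append.mp hg with hg | hg
    · rcases List.mem_append.mp hg with hg | hg
      · obtain ⟨L, hL, hgL⟩ := List.mem_flatten.mp hg
        obtain ⟨m, hm, rfl⟩ := List.mem_map.mp hL
        obtain ⟨k, hk, rfl⟩ := List.mem_map.mp hgL
        rw [List.mem_range] at hm
        rw [List.mem_range] at hk
        refine Set.mem_insert_iff.mpr (Or.inr ⟨(n-(q+1)+m) - k, by omega, by omega, ?_⟩)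
        congr 1
        omega
      · rw [List.mem_singleton] at hg
        rw [hg]
        exact Set.mem_insert _ _
    · obtain ⟨k, hk, rfl⟩ := List.mem_map.mp hg
      rw [List.mem_range] at hk
      refine Set.mem_insert_iff.mpr (Or.inr ⟨1 + k, by omega, by omega, ?_⟩)
      norm_cast
  · rw [List.prod_append, List.prod_append, List.prod_singleton, List.prod_flatten,
      List.map_map]
    have h1 : (List.range (q+1)).map (List.prod ∘ (fun m =>
        (List.range ((n-(q+1)+m)+1-(1+m))).map
          (fun k : ℕ => s (((n-(q+1)+m : ℕ):ℤ) - (k:ℤ)))))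
        = (List.range (q+1)).map (fun m => desc (1+m) (n-(q+1)+m)) := by
      apply List.map_congr_left
      intro m _
      exact (desc_def (1+m) (n-(q+1)+m)).symm
    rw [h1]
    have h2 : ((List.range (q+1)).map (fun m => desc (1+m) (n-(q+1)+m))).prod = p n (q+1) := rfl
    rw [h2]
    have h3 : ((List.range q).map (fun k : ℕ => s ((1:ℤ)+(k:ℤ)))).prod = asc 1 q := by
      rw [asc_def]
      norm_num
    rw [h3]

lemma len_eq (n q : ℕ) (hn : 2 ≤ n) (hq : q ≤ n - 1) :
    len n (desc 1 (n-q-1) * t * p n q) = (q+1) * (n-q) := by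
  obtain ⟨l, hlen, hmem, hprod⟩ := exists_word n q hn hq
  have hprod' : l.prod = desc 1 (n-q-1) * t * p n q := by
    rw [hprod, ← part1 n q hn hq]
  have hmemS : (q+1)*(n-q) ∈ {k | ∃ l : List (Equiv.Perm ℤ), l.length = k ∧
      (∀ g ∈ l, g ∈ gens n) ∧ l.prod = desc 1 (n-q-1) * t * p n q} :=
    ⟨l, hlen, hmem, hprod'⟩
  apply le_antisymm
  · exact Nat.sInf_le hmemS
  · apply le_csInf ⟨_, hmemS⟩
    rintro k ⟨l', hlen', hmem', hprod''⟩
    have hb := (prod_gens_bound n hn l' hmem').2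
    rw [hprod''] at hb
    have hlow := LL_lower n q hn hq
    omega


theorem statement12 (n : ℕ) (hn : 2 ≤ n) (q : ℕ) (hq : q ≤ n - 1) :
    desc 1 (n - q - 1) * t * p n q = p n (q + 1) * t * asc 1 q ∧
    len n (desc 1 (n - q - 1) * t * p n q) = (q + 1) * (n - q) :=
  ⟨part1 n q hn hq, len_eq n q hn hq⟩

end BnPaper
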